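/- The specific map η from the trace monoid over Σ = {aᵢ, bᵢ : i ∈ ℕ} with independence relation I = {(aᵢ,bᵢ), (bᵢ,aᵢ) : i ∈ ℕ}, defined on generators by η(aᵢ) = (cᵢ, dᵢ) and η(bᵢ) = (cᵢ, dᵢdᵢ), is a well-defined injective monoid homomorphism into {cᵢ : i ∈ ℕ}* × {dᵢ : i ∈ ℕ}*. -/

import Mathlib

/-- The congruence on the free monoid generated by `ab = ba` for independent `(a,b)`. -/
def traceCon {Γ : Type} (I : Γ → Γ → Prop) : Con (FreeMonoid Γ) :=
  conGen fun u v => ∃ a b : Γ, I a b ∧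
    u = FreeMonoid.of a * FreeMonoid.of b ∧ v = FreeMonoid.of b * FreeMonoid.of a

/-- The trace monoid of the independence alphabet `(Γ, I)`. -/
abbrev TraceMonoid {Γ : Type} (I : Γ → Γ → Prop) := (traceCon I).Quotient

/-- The alphabet `Σ = {aᵢ, bᵢ : i ∈ ℕ}`: the letter `aᵢ` is `(i, false)` and `bᵢ` is
`(i, true)`. The independence relation relates exactly `aᵢ` and `bᵢ` (both ways). -/
def pairI : ℕ × Bool → ℕ × Bool → Prop := fun x y => x.1 = y.1 ∧ x.2 ≠ y.2

namespace Stmt7Aux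

abbrev Γ' := ℕ × Bool

/-- Expansion: `aᵢ ↦ [i]`, `bᵢ ↦ [i,i]`. -/
def expand : List Γ' → List ℕ
  | [] => []
  | x :: t => (if x.2 then [x.1, x.1] else [x.1]) ++ expand t

/-- Number of `true`s in the maximal leading block of letters with index `i`. -/
def leadT (i : ℕ) : List Γ' → ℕ
  | [] => 0
  | x :: t => if x.1 = i then (cond x.2 1 0) + leadT i t else 0

/-- Length of the maximal leading run of `i`s. -/
def leadRun (i : ℕ) : List ℕ → ℕ
  | [] => 0
  | j :: t => if j = i then leadRun i t + 1 else 0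

abbrev R : FreeMonoid Γ' → FreeMonoid Γ' → Prop := fun u v => traceCon pairI u v

lemma leadRun_expand (i : ℕ) : ∀ w : List Γ',
    leadRun i (expand w) = leadRun i (w.map Prod.fst) + leadT i w
  | [] => rfl
  | (j, b) :: t => by
    rcases b with _ | _ <;> by_cases hj : j = i <;>
      simp [expand, leadT, leadRun, hj, leadRun_expand i t] <;> omega

lemma swap (i : ℕ) (b : Bool) (w : List Γ') :
    R (.ofList ((i, b) :: (i, !b) :: w)) (.ofList ((i, !b) :: (i, b) :: w)) := by
  have h : R (FreeMonoid.of ((i, b) : Γ') * FreeMonoid.of (i, !b))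
      (FreeMonoid.of ((i, !b) : Γ') * FreeMonoid.of (i, b)) :=
    ConGen.Rel.of _ _ ⟨(i, b), (i, !b), ⟨rfl, (Bool.not_ne_self b).symm⟩, rfl, rfl⟩
  have := (traceCon pairI).mul h ((traceCon pairI).refl (FreeMonoid.ofList w))
  simpa [FreeMonoid.ofList_cons, mul_assoc] using this

lemma pull (i : ℕ) : ∀ w : List Γ', 0 < leadT i w →
    ∃ w₂ : List Γ', R (.ofList w) (.ofList ((i, true) :: w₂)) ∧
      w.map Prod.fst = ((i, false) :: w₂).map Prod.fst ∧
      expand w = i :: expand ((i, false) :: w₂)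
  | [], h => by simp [leadT] at h
  | (j, b) :: t, h => by
    have hj : j = i := by
      by_contra hj; simp [leadT, hj] at h
    subst hj
    rcases b with _ | _
    · -- b = false
      have ht : 0 < leadT j t := by simpa [leadT] using h
      obtain ⟨t₂, hR, hfst, hexp⟩ := pull j t ht
      refine ⟨(j, false) :: t₂, ?_, ?_, ?_⟩
      · have h1 : R (.ofList ((j, false) :: t)) (.ofList ((j, false) :: (j, true) :: t₂)) := by
          have := (traceCon pairI).mul
            ((traceCon pairI).refl (FreeMonoid.of ((j, false) : Γ'))) hR
          simpa [FreeMonoid.ofList_cons] using this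
        have h2 := swap j false t₂
        exact (traceCon pairI).trans h1 (by simpa using h2)
      · simpa [expand] using hfst
      · simp only [expand, List.map] at hexp ⊢
        simp [hexp]
    · -- b = true
      exact ⟨t, (traceCon pairI).refl _, rfl, by simp [expand]⟩

lemma main (i0 : Unit) : ∀ n, ∀ u v : List Γ', u.length ≤ n →
    u.map Prod.fst = v.map Prod.fst → expand u = expand v →
    R (.ofList u) (.ofList v) := by
  intro n
  induction n with
  | zero =>
    intro u v hu hfst _
    have hu0 : u = [] := List.length_eq_zero_iff.mp (Nat.le_zero.mp hu)
    subst hu0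
    have : v.map Prod.fst = [] := hfst.symm
    have hv0 : v = [] := by simpa using congrArg List.length this
    subst hv0
    exact (traceCon pairI).refl _
  | succ n ih =>
    intro u v hu hfst hexp
    match u, v with
    | [], v =>
      have : v = [] := by simpa using (congrArg List.length hfst).symm
      subst this
      exact (traceCon pairI).refl _
    | x :: u', [] => simp at hfst
    | (i, bu) :: u', (j, bv) :: v' =>
      have hij : i = j := by simpa using congrArg (·.headI) hfst
      subst hij
      have hfst' : u'.map Prod.fst = v'.map Prod.fst := by simpa using hfst
      have hlen : u'.length ≤ n := by simpa using hu
      -- helper for the asymmetric case bu = false, bv = true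
      have key : ∀ (u' v' : List Γ'), u'.length ≤ n →
          u'.map Prod.fst = v'.map Prod.fst → expand u' = i :: expand v' →
          R (.ofList ((i, false) :: u')) (.ofList ((i, true) :: v')) := by
        intro u' v' hlen hfst' hexp'
        have hleadT : 0 < leadT i u' := by
          have h1 := leadRun_expand i u'
          have h2 := leadRun_expand i v'
          rw [hexp'] at h1
          have : leadRun i (i :: expand v') = leadRun i (expand v') + 1 := by
            simp [leadRun]
          rw [this, h2, hfst'] at h1
          omega
        obtain ⟨w₂, hR, hf2, he2⟩ := pull i u' hleadT
        have hexpw : expand ((i, false) :: w₂) = expand v' := by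
          rw [he2] at hexp'
          exact (List.cons.injEq _ _ _ _ ▸ hexp').2
        have hlenw : ((i, false) :: w₂).length ≤ n := by
          have := congrArg List.length hf2
          simp only [List.length_map] at this
          omega
        have hfw : ((i, false) :: w₂).map Prod.fst = v'.map Prod.fst :=
          hf2 ▸ hfst'
        have hmain : R (.ofList ((i, false) :: w₂)) (.ofList v') :=
          ih _ _ hlenw hfw hexpw
        -- chain
        have h1 : R (.ofList ((i, false) :: u')) (.ofList ((i, false) :: (i, true) :: w₂)) := by
          have := (traceCon pairI).mul
            ((traceCon pairI).refl (FreeMonoid.of ((i, false) : Γ'))) hR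
          simpa [FreeMonoid.ofList_cons] using this
        have h2 : R (.ofList ((i, false) :: (i, true) :: w₂))
            (.ofList ((i, true) :: (i, false) :: w₂)) := by
          simpa using swap i false w₂
        have h3 : R (.ofList ((i, true) :: (i, false) :: w₂)) (.ofList ((i, true) :: v')) := by
          have := (traceCon pairI).mul
            ((traceCon pairI).refl (FreeMonoid.of ((i, true) : Γ'))) hmain
          simpa [FreeMonoid.ofList_cons] using this
        exact (traceCon pairI).trans h1 ((traceCon pairI).trans h2 h3)
      match bu, bv with
      | false, false =>
        have hexp' : expand u' = expand v' := by simpa [expand] using hexp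
        have := (traceCon pairI).mul
          ((traceCon pairI).refl (FreeMonoid.of ((i, false) : Γ')))
          (ih u' v' hlen hfst' hexp')
        simpa [FreeMonoid.ofList_cons] using this
      | true, true =>
        have hexp' : expand u' = expand v' := by simpa [expand] using hexp
        have := (traceCon pairI).mul
          ((traceCon pairI).refl (FreeMonoid.of ((i, true) : Γ')))
          (ih u' v' hlen hfst' hexp')
        simpa [FreeMonoid.ofList_cons] using this
      | false, true =>
        have hexp' : expand u' = i :: expand v' := by simpa [expand] using hexp
        exact key u' v' hlen hfst' hexp'
      | true, false =>
        have hexp' : expand v' = i :: expand u' := by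
          have := hexp; simp [expand] at this; simp [this.symm]
        have hlenv : v'.length ≤ n := by
          have := congrArg List.length hfst'
          simp only [List.length_map] at this
          omega
        exact (traceCon pairI).symm (key v' u' hlenv hfst'.symm hexp')

def f2 : Γ' → FreeMonoid ℕ := fun x =>
  if x.2 then FreeMonoid.of x.1 * FreeMonoid.of x.1 else FreeMonoid.of x.1

def φ : FreeMonoid Γ' →* FreeMonoid ℕ × FreeMonoid ℕ :=
  (FreeMonoid.map Prod.fst).prod (FreeMonoid.lift f2)

lemma map_fst_ofList : ∀ l : List Γ',
    FreeMonoid.map Prod.fst (.ofList l) = FreeMonoid.ofList (l.map Prod.fst)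
  | [] => rfl
  | x :: t => by
    rw [FreeMonoid.ofList_cons, map_mul, FreeMonoid.map_of, map_fst_ofList t]
    rfl

lemma lift_f2_ofList : ∀ l : List Γ',
    FreeMonoid.lift f2 (.ofList l) = FreeMonoid.ofList (expand l)
  | [] => rfl
  | x :: t => by
    rw [FreeMonoid.ofList_cons, map_mul, FreeMonoid.lift_eval_of, lift_f2_ofList t]
    rcases x with ⟨i, _ | _⟩ <;>
      simp [f2, expand, FreeMonoid.ofList_cons, FreeMonoid.ofList_append, mul_assoc]

lemma resp : traceCon pairI ≤ Con.ker φ := by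
  apply Con.conGen_le.mpr
  rintro u v ⟨⟨i, ba⟩, ⟨j, bb⟩, ⟨hfst, hsnd⟩, rfl, rfl⟩
  simp only at hfst
  subst hfst
  rw [Con.ker_rel]
  rcases ba with _ | _ <;> rcases bb with _ | _ <;> simp_all [φ, f2, mul_assoc]

end Stmt7Aux

/-- The map `η` with `η(aᵢ) = (cᵢ, dᵢ)` and `η(bᵢ) = (cᵢ, dᵢdᵢ)` is a well-defined
injective monoid homomorphism from the trace monoid `M(Σ, I)` into the direct product
of two countably generated free monoids. -/
theorem stmt7 :
    ∃ η : TraceMonoid pairI →* FreeMonoid ℕ × FreeMonoid ℕ,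
      Function.Injective η ∧
      ∀ i : ℕ,
        η ((traceCon pairI).mk' (FreeMonoid.of (i, false))) =
          (FreeMonoid.of i, FreeMonoid.of i) ∧
        η ((traceCon pairI).mk' (FreeMonoid.of (i, true))) =
          (FreeMonoid.of i, FreeMonoid.of i * FreeMonoid.of i) := by
  classical
  refine ⟨(traceCon pairI).lift Stmt7Aux.φ Stmt7Aux.resp, ?_, ?_⟩
  · intro x y hxy
    obtain ⟨u, rfl⟩ := (traceCon pairI).mk'_surjective x
    obtain ⟨v, rfl⟩ := (traceCon pairI).mk'_surjective y
    rw [Con.lift_mk', Con.lift_mk'] at hxy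
    have h1 : FreeMonoid.map Prod.fst u = FreeMonoid.map Prod.fst v :=
      congrArg Prod.fst hxy
    have h2 : FreeMonoid.lift Stmt7Aux.f2 u = FreeMonoid.lift Stmt7Aux.f2 v :=
      congrArg Prod.snd hxy
    have hu : u = FreeMonoid.ofList u.toList := rfl
    have hv : v = FreeMonoid.ofList v.toList := rfl
    rw [hu, hv, Stmt7Aux.map_fst_ofList, Stmt7Aux.map_fst_ofList] at h1
    rw [hu, hv, Stmt7Aux.lift_f2_ofList, Stmt7Aux.lift_f2_ofList] at h2
    have hfst : u.toList.map Prod.fst = v.toList.map Prod.fst :=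
      congrArg FreeMonoid.toList h1
    have hexp : Stmt7Aux.expand u.toList = Stmt7Aux.expand v.toList :=
      congrArg FreeMonoid.toList h2
    have hR : traceCon pairI u v := by
      have := Stmt7Aux.main () u.toList.length u.toList v.toList le_rfl hfst hexp
      simpa using this
    exact (traceCon pairI).eq.mpr hR
  · intro i
    constructor <;>
      · rw [Con.lift_mk']
        simp [Stmt7Aux.φ, Stmt7Aux.f2, FreeMonoid.map_of, FreeMonoid.lift_eval_of]
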